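/- If player ONE has a winning strategy in the game G1(F), then F is a meager filter on ℕ; equivalently, the family of enumeration functions of members of F is bounded with respect to eventual domination. -/

import Mathlib

open Filter Set

/-- A strategy: maps finite sequences of the opponent's moves to a natural number. -/
abbrev Strat := List ℕ → ℕ

/-- TWO's move in inning `k` (0-indexed) when following strategy `σ` against ONE's
moves `m`: TWO has seen `m 0, …, m k`. -/
def twoFollow (σ : Strat) (m : ℕ → ℕ) (k : ℕ) : ℕ :=
  σ (List.ofFn fun i : Fin (k + 1) => m i)

/-- ONE's move in inning `k` when following strategy `σ` against TWO's moves `n`: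
ONE's move depends on `n 0, …, n (k-1)` (the first move is `σ []`). -/
def oneFollow (σ : Strat) (n : ℕ → ℕ) (k : ℕ) : ℕ :=
  σ (List.ofFn fun i : Fin k => n i)

/-- TWO wins the play `(m 0, n 0, m 1, n 1, …)` of the game `G1(F)`. -/
def TwoWins1 (F : Set (Set ℕ)) (m n : ℕ → ℕ) : Prop :=
  StrictMono n ∧ (∀ N : ℕ, ∃ k, N ≤ k ∧ m k < n k) ∧ Set.range n ∈ F

/-- TWO wins the play `(m 0, n 0, m 1, n 1, …)` of the game `G2(F)`. -/
def TwoWins2 (F : Set (Set ℕ)) (m n : ℕ → ℕ) : Prop :=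
  (∀ᶠ k in Filter.atTop, m k < n k) ∧ Set.range n ∈ F

/-- `σ` is a winning strategy for TWO in `G1(F)`. -/
def TwoWinning1 (F : Set (Set ℕ)) (σ : Strat) : Prop :=
  ∀ m : ℕ → ℕ, TwoWins1 F m (twoFollow σ m)

/-- `σ` is a winning strategy for ONE in `G1(F)`. -/
def OneWinning1 (F : Set (Set ℕ)) (σ : Strat) : Prop :=
  ∀ n : ℕ → ℕ, ¬ TwoWins1 F (oneFollow σ n) n

/-- `σ` is a winning strategy for TWO in `G2(F)`. -/
def TwoWinning2 (F : Set (Set ℕ)) (σ : Strat) : Prop :=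
  ∀ m : ℕ → ℕ, TwoWins2 F m (twoFollow σ m)

/-- `σ` is a winning strategy for ONE in `G2(F)`. -/
def OneWinning2 (F : Set (Set ℕ)) (σ : Strat) : Prop :=
  ∀ n : ℕ → ℕ, ¬ TwoWins2 F (oneFollow σ n) n

/-- `F` is a non-principal filter on `ℕ`: upward closed, closed under finite
intersections, and every member is infinite. -/
def IsNPFilter (F : Set (Set ℕ)) : Prop :=
  (∀ X ∈ F, ∀ Y : Set ℕ, X ⊆ Y → Y ∈ F) ∧
  (∀ X ∈ F, ∀ Y ∈ F, X ∩ Y ∈ F) ∧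
  (∀ X ∈ F, X.Infinite)

/-- `F` is a rare filter: every partition of `ℕ` into disjoint (nonempty) finite sets
admits a selector in `F`. -/
def IsRare (F : Set (Set ℕ)) : Prop :=
  ∀ I : ℕ → Set ℕ, (∀ n, (I n).Finite) → (∀ n, (I n).Nonempty) →
    (Pairwise fun i j => Disjoint (I i) (I j)) → (⋃ n, I n) = Set.univ →
    ∃ X ∈ F, ∀ n, (X ∩ I n).Subsingleton

/-- The subset of Cantor space `2^ℕ` corresponding to the filter `F`. -/
def cantorCoded (F : Set (Set ℕ)) : Set (ℕ → Bool) :=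
  {χ | {n | χ n = true} ∈ F}

/-- The increasing enumeration of `X ⊆ ℕ`. -/
noncomputable def enum (X : Set ℕ) : ℕ → ℕ := Nat.nth (· ∈ X)

/-- `g` eventually dominates `f`. -/
def EvDom (g f : ℕ → ℕ) : Prop := ∀ᶠ k in Filter.atTop, f k < g k

namespace Stmt2Aux
def lists (c : ℕ) : Finset (List ℕ) :=
  (Finset.range (c + 1)).biUnion fun L =>
    (Finset.univ : Finset (Fin L → Fin c)).image fun f => List.ofFn fun i => (f i : ℕ)
lemma mem_lists {c : ℕ} {l : List ℕ} (hlen : l.length ≤ c) (hel : ∀ x ∈ l, x < c) :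
    l ∈ lists c := by
  rw [lists, Finset.mem_biUnion]
  refine ⟨l.length, Finset.mem_range.2 (Nat.lt_succ_of_le hlen), ?_⟩
  rw [Finset.mem_image]
  refine ⟨fun i => ⟨l.get i, hel _ (l.get_mem i)⟩, Finset.mem_univ _, ?_⟩
  exact List.ofFn_get l
def seqB (σ : Strat) : ℕ → ℕ
  | 0 => 0
  | i + 1 => (lists (seqB σ i)).sup σ + seqB σ i + 1
lemma seqB_lt_succ (σ : Strat) (i : ℕ) : seqB σ i < seqB σ (i + 1) := by
  simp [seqB]
lemma seqB_strictMono (σ : Strat) : StrictMono (seqB σ) :=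
  strictMono_nat_of_lt_succ (seqB_lt_succ σ)
lemma self_le_seqB (σ : Strat) (i : ℕ) : i ≤ seqB σ i :=
  (seqB_strictMono σ).le_apply
lemma sigma_lt_seqB {σ : Strat} {l : List ℕ} {i : ℕ}
    (hlen : l.length ≤ seqB σ i) (hel : ∀ x ∈ l, x < seqB σ i) :
    σ l < seqB σ (i + 1) := by
  have := Finset.le_sup (f := σ) (mem_lists hlen hel)
  simp only [seqB]; omega

lemma hit {F : Set (Set ℕ)} (hF : IsNPFilter F) {σ : Strat} (hσ : OneWinning1 F σ)
    {X : Set ℕ} (hX : X ∈ F) :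
    ∃ I : ℕ, ∀ i ≥ I, ∃ n ∈ X, seqB σ i ≤ n ∧ n < seqB σ (i + 1):= by
  classical
  by_contra hc
  push_neg at hc
  set p : ℕ → Prop := (· ∈ X) with hp
  have hinf : (setOf p).Infinite := hF.2.2 X hX
  apply hσ (Nat.nth p)
  refine ⟨Nat.nth_strictMono hinf, ?_, ?_⟩
  · intro N
    obtain ⟨i, hiI, hmiss⟩ := hc (Nat.nth p N + 1)
    have hbig : Nat.nth p N < seqB σ i := lt_of_lt_of_le hiI (self_le_seqB σ i)
    set kk := Nat.count p (seqB σ i) with hkk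
    have hNk : N < kk := (Nat.lt_nth_iff_count_lt hinf).2 hbig
    refine ⟨kk, hNk.le, ?_⟩
    have h1 : seqB σ i ≤ Nat.nth p kk := Nat.le_nth_count hinf _
    have h2 : seqB σ (i + 1) ≤ Nat.nth p kk := by
      by_contra h
      exact absurd (hmiss _ (Nat.nth_mem_of_infinite hinf kk) h1) (by omega)
    refine lt_of_lt_of_le ?_ h2
    apply sigma_lt_seqB
    · simpa using Nat.count_le (p := p) (n := seqB σ i)
    · intro x hx
      simp only [List.mem_ofFn] at hx
      obtain ⟨j, rfl⟩ := hx
      exact Nat.nth_lt_of_lt_count (lt_of_lt_of_le j.isLt le_rfl)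
  · rw [Nat.range_nth_of_infinite hinf]
    exact hX
end Stmt2Aux

lemma nwd_isMeagre {α : Type*} [TopologicalSpace α] {s : Set α} (h : IsNowhereDense s) :
    IsMeagre s :=
  isMeagre_iff_countable_union_isNowhereDense.2
    ⟨{s}, by simpa using h, countable_singleton _, by simp⟩

open Stmt2Aux

/-- If ONE has a winning strategy in `G1(F)` then `F` is meager; equivalently, the
enumeration functions of members of `F` are bounded under eventual domination. -/
theorem stmt2 (F : Set (Set ℕ)) (hF : IsNPFilter F) (σ : Strat) (hσ : OneWinning1 F σ) :
    IsMeagre (cantorCoded F) ∧ ∃ g : ℕ → ℕ, ∀ X ∈ F, EvDom g (enum X) := by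
  classical
  constructor
  · -- meagerness
    set C : ℕ → Set (ℕ → Bool) := fun N =>
      {χ | ∀ i ≥ N, ∃ n, χ n = true ∧ seqB σ i ≤ n ∧ n < seqB σ (i + 1)} with hC
    have hsub : cantorCoded F ⊆ ⋃ N, C N := by
      intro χ hχ
      obtain ⟨I, hI⟩ := hit hF hσ (X := {n | χ n = true}) hχ
      exact Set.mem_iUnion.2 ⟨I, fun i hi => hI i hi⟩
    refine (isMeagre_iUnion fun N => ?_).mono hsub
    have hclosed : IsClosed (C N) := by
      have hCeq : C N = ⋂ i, ⋂ (_ : N ≤ i),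
          ⋃ n ∈ Finset.Ico (seqB σ i) (seqB σ (i + 1)), {χ : ℕ → Bool | χ n = true} := by
        ext χ
        simp only [hC, Set.mem_setOf_eq, Set.mem_iInter, Set.mem_iUnion, Finset.mem_Ico,
          ge_iff_le, exists_prop]
        constructor
        · intro h i hi; obtain ⟨n, h1, h2, h3⟩ := h i hi; exact ⟨n, ⟨h2, h3⟩, h1⟩
        · intro h i hi; obtain ⟨n, ⟨h2, h3⟩, h1⟩ := h i hi; exact ⟨n, h1, h2, h3⟩
      rw [hCeq]
      refine isClosed_iInter fun i => isClosed_iInter fun _ => ?_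
      refine Set.Finite.isClosed_biUnion (Finset.Ico _ _).finite_toSet fun n _ => ?_
      exact (isClosed_discrete ({true} : Set Bool)).preimage (continuous_apply (A := fun _ : ℕ => Bool) n)
    have hint : interior (C N) = ∅ := by
      rw [Set.eq_empty_iff_forall_notMem]
      intro χ hχ
      obtain ⟨I, u, hIu, hpi⟩ := isOpen_pi_iff.1 isOpen_interior χ hχ
      set χ' : ℕ → Bool := fun n => if n ∈ I then χ n else false with hχ'def
      have hχ'mem : χ' ∈ C N := by
        refine interior_subset (hpi (Set.mem_pi.2 fun a ha => ?_))
        have haI : a ∈ I := ha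
        have hval : χ' a = χ a := by simp only [hχ'def]; exact if_pos haI
        rw [hval]; exact (hIu a haI).2
      obtain ⟨n, hn1, hn2, _⟩ := hχ'mem (max N (I.sup id + 1)) (le_max_left _ _)
      have hnI : n ∈ I := by
        by_contra h
        rw [hχ'def] at hn1
        simp only [if_neg h] at hn1
        exact Bool.false_ne_true hn1
      have h1 : n ≤ I.sup id := Finset.le_sup (f := id) hnI
      have h2 : I.sup id + 1 ≤ seqB σ (max N (I.sup id + 1)) :=
        le_trans (le_max_right _ _) (self_le_seqB σ _)
      omega
    exact nwd_isMeagre (hclosed.isNowhereDense_iff.2 hint)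
  · -- boundedness
    refine ⟨fun j => seqB σ (2 * j + 2), fun X hX => ?_⟩
    obtain ⟨I, hI⟩ := hit hF hσ hX
    choose! x hx1 hx2 hx3 using hI
    set p : ℕ → Prop := (· ∈ X) with hp
    have hinf : (setOf p).Infinite := hF.2.2 X hX
    rw [EvDom, eventually_atTop]
    refine ⟨I, fun j hj => ?_⟩
    have key : j < Nat.count p (seqB σ (I + j + 1)) := by
      rw [Nat.count_eq_card_filter_range]
      have hcard : (Finset.Icc I (I + j)).card = j + 1 := by
        rw [Nat.card_Icc]; omega
      have hle : (Finset.Icc I (I + j)).card ≤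
          (Finset.filter (fun x => p x) (Finset.range (seqB σ (I + j + 1)))).card := by
        refine Finset.card_le_card_of_injOn x (fun a ha => ?_) ?_
        · rw [Finset.mem_coe, Finset.mem_Icc] at ha
          rw [Finset.mem_coe, Finset.mem_filter, Finset.mem_range]
          refine ⟨lt_of_lt_of_le (hx3 a ha.1) ((seqB_strictMono σ).monotone (by omega)),
            hx1 a ha.1⟩
        · intro a ha b hb hab
          simp only [Finset.coe_Icc, Set.mem_Icc] at ha hb
          by_contra hne
          rcases lt_or_gt_of_ne hne with h | h
          · have : x a < x b := lt_of_lt_of_le (lt_of_lt_of_le (hx3 a ha.1)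
              ((seqB_strictMono σ).monotone h)) (hx2 b hb.1)
            omega
          · have : x b < x a := lt_of_lt_of_le (lt_of_lt_of_le (hx3 b hb.1)
              ((seqB_strictMono σ).monotone h)) (hx2 a ha.1)
            omega
      omega
    have h1 : enum X j < seqB σ (I + j + 1) := Nat.nth_lt_of_lt_count key
    exact lt_of_lt_of_le h1 ((seqB_strictMono σ).monotone (by omega))
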